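/- Let k ∈ ℂ, let (S, C, D) be a Jacobi triple with modulus k, let κ, β ∈ ℂ with κ² = k, κ ≠ 0, β² = 1 − k, and let p, q ∈ ℤ. On the open set U = { z ∈ ℂ : C(z/κ) ≠ 0 }, the triple (z ↦ (−1)^p D(z/κ)/C(z/κ), z ↦ (−1)^{p+q} i·β·S(z/κ)/C(z/κ), z ↦ (−1)^{q+1} i·(β/κ)/C(z/κ)) satisfies system (1) with modulus 1/k. (This is the reciprocal-modulus form of sn = (−1)^p dc, cn = (−1)^{p+q} i√(1−k) sc, dn = (−1)^{q+1} i√((1−k)/k) nc.) -/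

import Mathlib

/-- A Jacobi triple with modulus `k`: the model is `(sn(·|k), cn(·|k), dn(·|k))`. -/
def IsJacobiTriple (k : ℂ) (S C D : ℂ → ℂ) : Prop :=
  ∀ z : ℂ, HasDerivAt S (C z * D z) z ∧ HasDerivAt C (-(S z * D z)) z ∧
    HasDerivAt D (-(k * S z * C z)) z ∧
    S z ^ 2 + C z ^ 2 = 1 ∧ D z ^ 2 + k * S z ^ 2 = 1

/-- A triple `(St, Ct, Dt)` satisfies system (1) with modulus `m` on `U`:
at every point of `U` the functions are differentiable with `St′ = Ct·Dt`,
and `St² + Ct² = 1` and `Dt² + m·St² = 1` hold on `U`. -/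
def SatisfiesSystem1 (m : ℂ) (St Ct Dt : ℂ → ℂ) (U : Set ℂ) : Prop :=
  ∀ z ∈ U, HasDerivAt St (Ct z * Dt z) z ∧
    DifferentiableAt ℂ Ct z ∧ DifferentiableAt ℂ Dt z ∧
    St z ^ 2 + Ct z ^ 2 = 1 ∧ Dt z ^ 2 + m * St z ^ 2 = 1

theorem stmt_3 (k : ℂ) (S C D : ℂ → ℂ) (hJ : IsJacobiTriple k S C D)
    (κ β : ℂ) (hκ : κ ^ 2 = k) (hκ0 : κ ≠ 0) (hβ : β ^ 2 = 1 - k) (p q : ℤ) :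
    SatisfiesSystem1 (1 / k)
      (fun z => (-1 : ℂ) ^ p * D (z / κ) / C (z / κ))
      (fun z => (-1 : ℂ) ^ (p + q) * Complex.I * β * S (z / κ) / C (z / κ))
      (fun z => (-1 : ℂ) ^ (q + 1) * Complex.I * (β / κ) / C (z / κ))
      {z : ℂ | C (z / κ) ≠ 0} := by
  intro z hz
  simp only [Set.mem_setOf_eq] at hz
  obtain ⟨hS, hC, hD, h1, h2⟩ := hJ (z / κ)
  have hk0 : k ≠ 0 := hκ ▸ pow_ne_zero 2 hκ0
  have hne : ((-1:ℂ)) ≠ 0 := by norm_num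
  have hlin : HasDerivAt (fun z : ℂ => z / κ) (1 / κ) z := by
    simpa using (hasDerivAt_id z).div_const κ
  have hDc : HasDerivAt (fun z : ℂ => D (z / κ)) (-(k * S (z/κ) * C (z/κ)) * (1 / κ)) z :=
    hD.comp z hlin
  have hCc : HasDerivAt (fun z : ℂ => C (z / κ)) (-(S (z/κ) * D (z/κ)) * (1 / κ)) z :=
    hC.comp z hlin
  have hSc : HasDerivAt (fun z : ℂ => S (z / κ)) (C (z/κ) * D (z/κ) * (1 / κ)) z :=
    hS.comp z hlin
  have hD2 : D (z/κ) ^ 2 = 1 - k * S (z/κ) ^ 2 := by linear_combination h2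
  have hC2 : C (z/κ) ^ 2 = 1 - S (z/κ) ^ 2 := by linear_combination h1
  have hI : Complex.I ^ 2 = -1 := Complex.I_sq
  have hpsq : ((-1:ℂ) ^ p) ^ 2 = 1 := by
    rw [← zpow_natCast ((-1:ℂ) ^ p) 2, ← zpow_mul]
    rw [show p * (2:ℕ) = 2 * p by push_cast; ring, zpow_mul]
    norm_num
  have hpqsq : ((-1:ℂ) ^ (p + q)) ^ 2 = 1 := by
    rw [← zpow_natCast ((-1:ℂ) ^ (p+q)) 2, ← zpow_mul]
    rw [show (p+q) * (2:ℕ) = 2 * (p+q) by push_cast; ring, zpow_mul]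
    norm_num
  have hq1sq : ((-1:ℂ) ^ (q + 1)) ^ 2 = 1 := by
    rw [← zpow_natCast ((-1:ℂ) ^ (q+1)) 2, ← zpow_mul]
    rw [show (q+1) * (2:ℕ) = 2 * (q+1) by push_cast; ring, zpow_mul]
    norm_num
  have hmul : (-1:ℂ) ^ (p + q) * (-1:ℂ) ^ (q + 1) = -(-1:ℂ) ^ p := by
    rw [← zpow_add₀ hne, show p + q + (q + 1) = 2 * q + (p + 1) by ring,
      zpow_add₀ hne, zpow_mul, zpow_add₀ hne]
    norm_num
  have hβ2 : D (z/κ) ^ 2 - k * C (z/κ) ^ 2 = β ^ 2 := by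
    linear_combination hD2 - k * hC2 - hβ
  have key : D (z/κ) ^ 2 - β ^ 2 * S (z/κ) ^ 2 = C (z/κ) ^ 2 := by
    linear_combination hD2 - S (z/κ) ^ 2 * hβ - hC2
  refine ⟨?_, ?_, ?_, ?_, ?_⟩
  · have hdiv0 := (hDc.div hCc hz).const_mul ((-1:ℂ) ^ p)
    have hdiv : HasDerivAt (fun z => (-1 : ℂ) ^ p * D (z / κ) / C (z / κ))
        ((-1:ℂ) ^ p * ((-(k * S (z/κ) * C (z/κ)) * (1 / κ) * C (z / κ) -
          D (z / κ) * (-(S (z/κ) * D (z/κ)) * (1 / κ))) / C (z / κ) ^ 2)) z := by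
      simpa [← mul_div_assoc] using hdiv0
    convert hdiv using 1
    show ((-1:ℂ)) ^ (p + q) * Complex.I * β * S (z / κ) / C (z / κ) *
        ((-1:ℂ) ^ (q + 1) * Complex.I * (β / κ) / C (z / κ)) = _
    field_simp
    linear_combination (Complex.I ^ 2 * β ^ 2 * S (z/κ)) * hmul - ((-1:ℂ) ^ p * β ^ 2 * S (z/κ)) * hI -
      (S (z/κ) * (-1:ℂ) ^ p) * hβ2
  · exact (((hSc.const_mul _).div hCc hz)).differentiableAt
  · exact ((differentiableAt_const _).div hCc.differentiableAt hz)
  · field_simp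
    linear_combination (D (z/κ) ^ 2) * hpsq + (Complex.I ^ 2 * β ^ 2 * S (z/κ) ^ 2) * hpqsq +
      (β ^ 2 * S (z/κ) ^ 2) * hI + key
  · field_simp
    linear_combination (Complex.I ^ 2 * β ^ 2 * k) * hq1sq + (β ^ 2 * k) * hI +
      (κ ^ 2 * D (z/κ) ^ 2) * hpsq + (D (z/κ) ^ 2 - k * C (z/κ) ^ 2) * hκ + k * hβ2
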